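/- Suppose the best rational minimax approximant ξ* = p*/q* (irreducible, non-degenerate, with q*(xⱼ) ≠ 0 for all j) of data (xⱼ, fⱼ), j = 1,…,m, is unique, with error η_∞ = max_j |fⱼ − ξ*(xⱼ)| > 0. Then the infimum η̃ of the linearized problem — minimize η over (η, p, q) with deg p ≤ n₁, 0 ≢ q with deg q ≤ n₂, subject to |fⱼ q(xⱼ) − p(xⱼ)| ≤ η |q(xⱼ)| for all j — equals η_∞, and (η_∞, p*, q*) attains it. -/

import Mathlib

open Polynomial

private lemma abs_sub_div_le' {f a b : ℂ} {t : ℝ} (hb : b ≠ 0)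
    (h : ‖f * b - a‖ ≤ t * ‖b‖) :
    ‖f - a / b‖ ≤ t := by
  have hb' : (0:ℝ) < ‖b‖ := norm_pos_iff.mpr hb
  have he : f - a / b = (f * b - a) / b := by field_simp
  rw [he, norm_div, div_le_iff₀ hb']
  exact h

private lemma abs_mul_sub_le' {f a b : ℂ} {t : ℝ} (hb : b ≠ 0)
    (h : ‖f - a / b‖ ≤ t) :
    ‖f * b - a‖ ≤ t * ‖b‖ := by
  have he : f * b - a = (f - a / b) * b := by field_simp
  rw [he, norm_mul]
  exact mul_le_mul_of_nonneg_right h (norm_nonneg b)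

private lemma abs_sub_le_add (a b : ℂ) :
    ‖a - b‖ ≤ ‖a‖ + ‖b‖ := by
  simpa using norm_sub_le a b

private lemma abs_add_ge_sub (a b : ℂ) :
    ‖a‖ - ‖b‖ ≤ ‖a + b‖ := by
  have := norm_sub_le (a + b) b
  simpa using this

private lemma card_nodes_le_natDegree {m : ℕ} {x : Fin m → ℂ} (hx : Function.Injective x)
    {q : Polynomial ℂ} (hq : q ≠ 0) (T : Finset (Fin m))
    (hT : ∀ j ∈ T, q.eval (x j) = 0) : T.card ≤ q.natDegree := by
  have h1 : T.card = (T.image x).card := (Finset.card_image_of_injective T hx).symm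
  have h2 : T.image x ⊆ q.roots.toFinset := by
    intro y hy
    simp only [Finset.mem_image] at hy
    obtain ⟨j, hj, rfl⟩ := hy
    rw [Multiset.mem_toFinset, mem_roots hq]
    exact hT j hj
  calc T.card = (T.image x).card := h1
    _ ≤ q.roots.toFinset.card := Finset.card_le_card h2
    _ ≤ Multiset.card q.roots := q.roots.toFinset_card_le
    _ ≤ q.natDegree := q.card_roots'

/-- Theorem 2.1 (α = 1): under uniqueness, irreducibility and non-degeneracy of the
minimax approximant `ξ* = p/q`, the infimum of the linearized problem equals `η∞`
and is attained at `(η∞, p, q)`. -/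
theorem stmt8 {m : ℕ} (n₁ n₂ : ℕ) (hm : n₁ + n₂ + 2 ≤ m) (x : Fin m → ℂ)
    (hx : Function.Injective x) (f : Fin m → ℂ)
    (p q : Polynomial ℂ) (hp : p.natDegree ≤ n₁) (hq : q.natDegree ≤ n₂)
    (hq0 : ∀ j, q.eval (x j) ≠ 0) (hcop : IsCoprime p q)
    (hnd : p.natDegree = n₁ ∨ q.natDegree = n₂)
    (η : ℝ) (hηpos : 0 < η)
    (hub : ∀ j, ‖f j - p.eval (x j) / q.eval (x j)‖ ≤ η)
    (hatt : ∃ j, ‖f j - p.eval (x j) / q.eval (x j)‖ = η)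
    (hmin : ∀ p' q' : Polynomial ℂ, p'.natDegree ≤ n₁ → q'.natDegree ≤ n₂ →
      (∀ j, q'.eval (x j) ≠ 0) →
      ∃ j, η ≤ ‖f j - p'.eval (x j) / q'.eval (x j)‖)
    (huniq : ∀ p' q' : Polynomial ℂ, p'.natDegree ≤ n₁ → q'.natDegree ≤ n₂ →
      (∀ j, q'.eval (x j) ≠ 0) →
      (∀ j, ‖f j - p'.eval (x j) / q'.eval (x j)‖ ≤ η) →
      p' * q = p * q') :
    (∀ j, ‖f j * q.eval (x j) - p.eval (x j)‖ ≤
        η * ‖q.eval (x j)‖) ∧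
      ∀ (η' : ℝ) (p' q' : Polynomial ℂ), q' ≠ 0 →
        p'.natDegree ≤ n₁ → q'.natDegree ≤ n₂ →
        (∀ j, ‖f j * q'.eval (x j) - p'.eval (x j)‖ ≤
          η' * ‖q'.eval (x j)‖) →
        η ≤ η' := by
  have hub' : ∀ j, ‖f j * q.eval (x j) - p.eval (x j)‖ ≤
      η * ‖q.eval (x j)‖ := fun j => abs_mul_sub_le' (hq0 j) (hub j)
  have hqn0 : q ≠ 0 := by
    intro h
    exact hq0 ⟨0, by omega⟩ (by simp [h])
  refine ⟨hub', ?_⟩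
  intro η' p' q' hq'ne hp' hq' hcon
  by_contra hcontra
  push_neg at hcontra
  -- `hcontra : η' < η`
  -- there is a node where q' does not vanish
  have hens : ∃ j₀, q'.eval (x j₀) ≠ 0 := by
    by_contra hall
    push_neg at hall
    have := card_nodes_le_natDegree hx hq'ne Finset.univ (fun j _ => hall j)
    simp only [Finset.card_univ, Fintype.card_fin] at this
    omega
  obtain ⟨j₀, hj₀⟩ := hens
  have hη'0 : 0 ≤ η' := by
    have h1 := hcon j₀
    have h2 : (0:ℝ) < ‖q'.eval (x j₀)‖ := norm_pos_iff.mpr hj₀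
    nlinarith [norm_nonneg (f j₀ * q'.eval (x j₀) - p'.eval (x j₀))]
  -- p' vanishes wherever q' does
  have hp'S : ∀ j, q'.eval (x j) = 0 → p'.eval (x j) = 0 := by
    intro j hj
    have h1 := hcon j
    rw [hj] at h1
    simp only [mul_zero, zero_sub, norm_neg, norm_zero, mul_zero] at h1
    exact norm_eq_zero.mp (le_antisymm h1 (norm_nonneg _))
  -- choose a small positive δ
  set c : Fin m → ℝ := fun j => if q'.eval (x j) = 0 then 1
    else (η - η') * ‖q'.eval (x j)‖ / (2 * η * ‖q.eval (x j)‖)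
    with hc_def
  have hcpos : ∀ j, 0 < c j := by
    intro j
    by_cases hj : q'.eval (x j) = 0
    · simp [hc_def, hj]
    · simp only [hc_def, if_neg hj]
      apply div_pos
      · exact mul_pos (by linarith) (norm_pos_iff.mpr hj)
      · exact mul_pos (by positivity) (norm_pos_iff.mpr (hq0 j))
  have hnem : (Finset.univ : Finset (Fin m)).Nonempty := ⟨j₀, Finset.mem_univ _⟩
  set δ : ℝ := Finset.univ.inf' hnem c with hδ_def
  have hδpos : 0 < δ := (Finset.lt_inf'_iff hnem).mpr (fun j _ => hcpos j)
  have hδle : ∀ j, δ ≤ c j := fun j => Finset.inf'_le c (Finset.mem_univ j)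
  have hδC : ((δ:ℂ)) ≠ 0 := by exact_mod_cast hδpos.ne'
  set P : Polynomial ℂ := p' + Polynomial.C (δ:ℂ) * p with hP_def
  set Q : Polynomial ℂ := q' + Polynomial.C (δ:ℂ) * q with hQ_def
  have hPev : ∀ j, P.eval (x j) = p'.eval (x j) + (δ:ℂ) * p.eval (x j) := by
    intro j; simp [hP_def]
  have hQev : ∀ j, Q.eval (x j) = q'.eval (x j) + (δ:ℂ) * q.eval (x j) := by
    intro j; simp [hQ_def]
  have hQmain : ∀ j, Q.eval (x j) ≠ 0 ∧
      ‖f j - P.eval (x j) / Q.eval (x j)‖ ≤ η := by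
    intro j
    by_cases hj : q'.eval (x j) = 0
    · have hPj : P.eval (x j) = (δ:ℂ) * p.eval (x j) := by
        rw [hPev, hp'S j hj, zero_add]
      have hQj : Q.eval (x j) = (δ:ℂ) * q.eval (x j) := by
        rw [hQev, hj, zero_add]
      have hQne : Q.eval (x j) ≠ 0 := by
        rw [hQj]; exact mul_ne_zero hδC (hq0 j)
      refine ⟨hQne, ?_⟩
      rw [hPj, hQj, mul_div_mul_left _ _ hδC]
      exact hub j
    · set a := ‖q'.eval (x j)‖ with ha_def
      set b := ‖q.eval (x j)‖ with hb_def
      have ha : 0 < a := norm_pos_iff.mpr hj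
      have hb : 0 < b := norm_pos_iff.mpr (hq0 j)
      have hδj : δ ≤ (η - η') * a / (2 * η * b) := by
        have h5 := hδle j
        rw [hc_def] at h5
        simpa [if_neg hj, ← ha_def, ← hb_def] using h5
      have key1 : δ * (2 * η * b) ≤ (η - η') * a := by
        rw [← le_div_iff₀ (by positivity)]
        exact hδj
      have hnum : ‖f j * Q.eval (x j) - P.eval (x j)‖ ≤ η' * a + δ * (η * b) := by
        have e1 : f j * Q.eval (x j) - P.eval (x j)
            = (f j * q'.eval (x j) - p'.eval (x j))
              + (δ:ℂ) * (f j * q.eval (x j) - p.eval (x j)) := by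
          rw [hPev, hQev]; ring
        rw [e1]
        refine (norm_add_le _ _).trans ?_
        have h2 : ‖(δ:ℂ) * (f j * q.eval (x j) - p.eval (x j))‖
            = δ * ‖f j * q.eval (x j) - p.eval (x j)‖ := by
          rw [norm_mul, Complex.norm_real, Real.norm_eq_abs, abs_of_pos hδpos]
        rw [h2]
        have h3 := hcon j
        have h4 := hub' j
        have h6 : δ * ‖f j * q.eval (x j) - p.eval (x j)‖ ≤ δ * (η * b) :=
          mul_le_mul_of_nonneg_left h4 hδpos.le
        exact add_le_add h3 h6
      have hden : a - δ * b ≤ ‖Q.eval (x j)‖ := by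
        rw [hQev]
        have h4 := abs_add_ge_sub (q'.eval (x j)) ((δ:ℂ) * q.eval (x j))
        have h5 : ‖(δ:ℂ) * q.eval (x j)‖ = δ * b := by
          rw [norm_mul, Complex.norm_real, Real.norm_eq_abs, abs_of_pos hδpos]
        rw [h5] at h4
        exact h4
      have hposQ : 0 < ‖Q.eval (x j)‖ := by
        have : δ * b < a := by nlinarith
        linarith
      have hQne : Q.eval (x j) ≠ 0 := norm_pos_iff.mp hposQ
      refine ⟨hQne, abs_sub_div_le' hQne ?_⟩
      have h7 : η' * a + δ * (η * b) ≤ η * (a - δ * b) := by nlinarith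
      calc ‖f j * Q.eval (x j) - P.eval (x j)‖ ≤ η' * a + δ * (η * b) := hnum
        _ ≤ η * (a - δ * b) := h7
        _ ≤ η * ‖Q.eval (x j)‖ := mul_le_mul_of_nonneg_left hden hηpos.le
  have hPdeg : P.natDegree ≤ n₁ :=
    (Polynomial.natDegree_add_le _ _).trans
      (max_le hp' ((Polynomial.natDegree_C_mul_le _ _).trans hp))
  have hQdeg : Q.natDegree ≤ n₂ :=
    (Polynomial.natDegree_add_le _ _).trans
      (max_le hq' ((Polynomial.natDegree_C_mul_le _ _).trans hq))
  have hkey := huniq P Q hPdeg hQdeg (fun j => (hQmain j).1) (fun j => (hQmain j).2)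
  have hpq : p' * q = p * q' := by
    have h8 : p' * q + Polynomial.C (δ:ℂ) * (p * q)
        = p * q' + Polynomial.C (δ:ℂ) * (p * q) := by
      calc p' * q + Polynomial.C (δ:ℂ) * (p * q) = P * q := by rw [hP_def]; ring
        _ = p * Q := hkey
        _ = p * q' + Polynomial.C (δ:ℂ) * (p * q) := by rw [hQ_def]; ring
    exact add_right_cancel h8
  obtain ⟨jm, hjm⟩ := hatt
  by_cases hqm : q'.eval (x jm) = 0
  · -- the attainment node is a zero of q'
    by_cases hp0 : p = 0
    · -- corner case : p = 0, hence q is a unit and p' = 0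
      have hp'0 : p' = 0 := by
        have h9 : p' * q = 0 := by rw [hpq, hp0, zero_mul]
        exact (mul_eq_zero.mp h9).resolve_right hqn0
      have hub0 : ∀ j, ‖f j‖ ≤ η := by
        intro j
        have := hub j
        rw [hp0] at this
        simpa using this
      have hcon0 : ∀ j, q'.eval (x j) ≠ 0 → ‖f j‖ ≤ η' := by
        intro j hj
        have h1 := hcon j
        rw [hp'0] at h1
        simp only [Polynomial.eval_zero, sub_zero, norm_mul] at h1
        exact le_of_mul_le_mul_right h1 (norm_pos_iff.mpr hj)
      set S : Finset (Fin m) := Finset.univ.filter (fun j => q'.eval (x j) = 0) with hS_def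
      have hjmS : jm ∈ S := by simp [hS_def, hqm]
      have hScard : S.card ≤ n₂ :=
        (card_nodes_le_natDegree hx hq'ne S
          (fun j hj => by simpa [hS_def] using hj)).trans hq'
      set w : Fin m → ℂ := fun j => if f j = 0 then 1 else 2 * (η:ℂ) / f j with hw_def
      have hηC : ((η:ℂ)) ≠ 0 := by exact_mod_cast hηpos.ne'
      have hw0 : ∀ j, w j ≠ 0 := by
        intro j
        by_cases hf : f j = 0
        · simp [hw_def, hf]
        · simp only [hw_def, if_neg hf]
          exact div_ne_zero (mul_ne_zero two_ne_zero hηC) hf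
      have hinj : Set.InjOn x S := hx.injOn
      set h := Lagrange.interpolate S x w with hh_def
      have hhev : ∀ j ∈ S, h.eval (x j) = w j :=
        fun j hj => Lagrange.eval_interpolate_at_node w hinj hj
      have hhdeg : h.natDegree ≤ n₂ := by
        by_cases h0 : h = 0
        · simp [h0]
        · have hd := Lagrange.degree_interpolate_lt w hinj
          rw [← hh_def] at hd
          have := (Polynomial.natDegree_lt_iff_degree_lt h0).mpr hd
          omega
      set B : Fin m → ℝ := fun j => if q'.eval (x j) = 0 then 0
        else (‖h.eval (x j)‖ + η / (η - η')) / ‖q'.eval (x j)‖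
        with hB_def
      set A : ℝ := Finset.univ.sup' hnem B with hA_def
      have hA0 : 0 ≤ A := by
        have h1 : B jm = 0 := by simp [hB_def, hqm]
        have h2 := Finset.le_sup' B (Finset.mem_univ jm)
        rw [h1] at h2
        exact h2
      set Q2 : Polynomial ℂ := Polynomial.C (A:ℂ) * q' + h with hQ2_def
      have hQ2deg : Q2.natDegree ≤ n₂ :=
        (Polynomial.natDegree_add_le _ _).trans
          (max_le ((Polynomial.natDegree_C_mul_le _ _).trans hq') hhdeg)
      have hQ2ev : ∀ j, Q2.eval (x j) = (A:ℂ) * q'.eval (x j) + h.eval (x j) := by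
        intro j; simp [hQ2_def]
      have hmain2 : ∀ j, Q2.eval (x j) ≠ 0 ∧
          ‖f j - (η:ℂ) / Q2.eval (x j)‖ ≤ η := by
        intro j
        by_cases hj : q'.eval (x j) = 0
        · have hjS : j ∈ S := by simp [hS_def, hj]
          have hev : Q2.eval (x j) = w j := by
            rw [hQ2ev, hj, mul_zero, zero_add]
            exact hhev j hjS
          refine ⟨hev ▸ hw0 j, ?_⟩
          rw [hev]
          by_cases hf : f j = 0
          · have hw1 : w j = 1 := by simp [hw_def, hf]
            rw [hw1, hf, div_one, zero_sub, norm_neg, Complex.norm_real, Real.norm_eq_abs,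
              abs_of_pos hηpos]
          · have he1 : (η:ℂ) / w j = f j / 2 := by
              rw [hw_def]
              simp only [if_neg hf]
              field_simp
            rw [he1]
            have he2 : f j - f j / 2 = f j / 2 := by ring
            rw [he2, norm_div, Complex.norm_two]
            have := hub0 j
            linarith
        · have haq : 0 < ‖q'.eval (x j)‖ := norm_pos_iff.mpr hj
          have hAj : B j ≤ A := Finset.le_sup' B (Finset.mem_univ j)
          have hBj : B j = (‖h.eval (x j)‖ + η / (η - η'))
              / ‖q'.eval (x j)‖ := by
            simp only [hB_def, if_neg hj]
          rw [hBj] at hAj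
          have hAa : ‖h.eval (x j)‖ + η / (η - η')
              ≤ A * ‖q'.eval (x j)‖ := (div_le_iff₀ haq).mp hAj
          have hlow : η / (η - η') ≤ ‖Q2.eval (x j)‖ := by
            rw [hQ2ev]
            have h4 := abs_add_ge_sub ((A:ℂ) * q'.eval (x j)) (h.eval (x j))
            have h5 : ‖(A:ℂ) * q'.eval (x j)‖
                = A * ‖q'.eval (x j)‖ := by
              rw [norm_mul, Complex.norm_real, Real.norm_eq_abs, abs_of_nonneg hA0]
            rw [h5] at h4
            linarith
          have hηη' : (0:ℝ) < η - η' := by linarith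
          have hposQ : 0 < ‖Q2.eval (x j)‖ :=
            lt_of_lt_of_le (div_pos hηpos hηη') hlow
          have hQne : Q2.eval (x j) ≠ 0 := norm_pos_iff.mp hposQ
          refine ⟨hQne, ?_⟩
          have hfr : ‖(η:ℂ) / Q2.eval (x j)‖ ≤ η - η' := by
            rw [norm_div, Complex.norm_real, Real.norm_eq_abs, abs_of_pos hηpos, div_le_iff₀ hposQ]
            calc η = (η - η') * (η / (η - η')) := by field_simp
              _ ≤ (η - η') * ‖Q2.eval (x j)‖ :=
                  mul_le_mul_of_nonneg_left hlow hηη'.le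
          calc ‖f j - (η:ℂ) / Q2.eval (x j)‖
              ≤ ‖f j‖ + ‖(η:ℂ) / Q2.eval (x j)‖ :=
                abs_sub_le_add _ _
            _ ≤ η' + (η - η') := add_le_add (hcon0 j hj) hfr
            _ = η := by ring
      have hfinal := huniq (Polynomial.C (η:ℂ)) Q2 (by simp) hQ2deg
        (fun j => (hmain2 j).1) (fun j => by simpa using (hmain2 j).2)
      rw [hp0, zero_mul] at hfinal
      rcases mul_eq_zero.mp hfinal with h | h
      · exact hηC (by simpa using h)
      · exact hqn0 h
    · -- p ≠ 0 : divisibility and degree contradiction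
      have hpd : p ∣ p' := hcop.dvd_of_dvd_mul_right ⟨q', hpq⟩
      obtain ⟨s, hs⟩ := hpd
      have hq'eq : q' = q * s := by
        have h2 : p * (q * s) = p * q' := by rw [← hpq, hs]; ring
        exact (mul_left_cancel₀ hp0 h2).symm
      have hs0 : s ≠ 0 := by
        rintro rfl
        rw [mul_zero] at hq'eq
        exact hq'ne hq'eq
      have hsm : s.eval (x jm) = 0 := by
        have h3 : q.eval (x jm) * s.eval (x jm) = 0 := by
          rw [← Polynomial.eval_mul, ← hq'eq]; exact hqm
        exact (mul_eq_zero.mp h3).resolve_left (hq0 jm)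
      have hsdeg : 0 < s.natDegree := by
        by_contra hcon2
        push_neg at hcon2
        have h4 : s = Polynomial.C (s.coeff 0) :=
          Polynomial.eq_C_of_natDegree_eq_zero (Nat.le_zero.mp hcon2)
        rw [h4] at hsm
        simp only [Polynomial.eval_C] at hsm
        exact hs0 (h4.trans (by rw [hsm, map_zero]))
      rcases hnd with hnd | hnd
      · have hp'0 : p' ≠ 0 := by
          rw [hs]; exact mul_ne_zero hp0 hs0
        have h5 : p'.natDegree = p.natDegree + s.natDegree := by
          rw [hs]; exact Polynomial.natDegree_mul hp0 hs0
        omega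
      · have h5 : q'.natDegree = q.natDegree + s.natDegree := by
          rw [hq'eq]; exact Polynomial.natDegree_mul hqn0 hs0
        omega
  · -- attainment node : q' nonzero there, direct contradiction
    have hev : p'.eval (x jm) * q.eval (x jm) = p.eval (x jm) * q'.eval (x jm) := by
      have := congrArg (Polynomial.eval (x jm)) hpq
      simpa using this
    have hdiv : p.eval (x jm) / q.eval (x jm) = p'.eval (x jm) / q'.eval (x jm) := by
      rw [div_eq_div_iff (hq0 jm) hqm]
      linear_combination -hev
    have h1 : ‖f jm - p'.eval (x jm) / q'.eval (x jm)‖ ≤ η' :=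
      abs_sub_div_le' hqm (hcon jm)
    rw [hdiv] at hjm
    rw [hjm] at h1
    linarith
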